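/- arXiv:0905.2229 — 3 statements merged into one kernel-verified Lean document; each statement's English description precedes it below -/
import Mathlib

section
/- Let K be a field, let m ≥ 2 be an integer, and work in the polynomial ring K[x,y]. Then the product of ideals ∏_{i=1}^{m-1} (x^{m-i}, y^i) is equal to the ideal J_m generated by the m monomials x^{C(m-i+1,2)} · y^{C(i,2)} for i = 1, ..., m, where C(n,2) = n(n-1)/2 denotes a binomial coefficient. -/
open MvPolynomial

open Finset in
private lemma aux_sum_lower_aux : ∀ (n : ℕ) (S : Finset ℕ), S.card = n → (∀ i ∈ S, 1 ≤ i) →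
    (n + 1).choose 2 ≤ ∑ i ∈ S, i := by
  intro n
  induction n with
  | zero => intro S hn h; simp
  | succ n ih =>
    intro S hn h
    have hne : S.Nonempty := card_pos.mp (by omega)
    set M := S.max' hne with hM
    have hMS : M ∈ S := S.max'_mem hne
    have hsub : S ⊆ Finset.Icc 1 M := fun i hi => Finset.mem_Icc.mpr ⟨h i hi, S.le_max' i hi⟩
    have hcard : S.card ≤ M := by
      have := Finset.card_le_card hsub
      simpa [Nat.card_Icc] using this
    have h2 : (n + 1).choose 2 ≤ ∑ i ∈ S.erase M, i :=
      ih _ (by rw [Finset.card_erase_of_mem hMS, hn]; rfl)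
        (fun i hi => h i (Finset.mem_of_mem_erase hi))
    have h3 : ∑ i ∈ S, i = M + ∑ i ∈ S.erase M, i := (Finset.add_sum_erase _ _ hMS).symm
    have hch : (n + 1 + 1).choose 2 = (n + 1) + (n + 1).choose 2 := by
      rw [Nat.choose_succ_succ]
      simp
    omega

private lemma aux_sum_lower (S : Finset ℕ) (h : ∀ i ∈ S, 1 ≤ i) :
    (S.card + 1).choose 2 ≤ ∑ i ∈ S, i := aux_sum_lower_aux S.card S rfl h

private lemma aux_sum_Icc_id (n : ℕ) : ∑ i ∈ Finset.Icc 1 n, i = (n + 1).choose 2 := by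
  induction n with
  | zero => simp
  | succ n ih =>
    rw [Finset.sum_Icc_succ_top (by omega), ih, Nat.choose_succ_succ (n + 1) 1]
    simp [add_comm]

/-- The product of ideals `∏_{i=1}^{m-1} (x^{m-i}, y^i)` in `K[x,y]` equals the ideal
`J_m` generated by the monomials `x^(C(m-i+1,2)) * y^(C(i,2))` for `i = 1, ..., m`. -/
theorem stmt_0 (K : Type*) [Field K] (m : ℕ) (hm : 2 ≤ m) :
    (∏ i ∈ Finset.Icc 1 (m - 1),
        Ideal.span {(X 0 : MvPolynomial (Fin 2) K) ^ (m - i),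
          (X 1 : MvPolynomial (Fin 2) K) ^ i}) =
      Ideal.span ((fun i : ℕ =>
          (X 0 : MvPolynomial (Fin 2) K) ^ Nat.choose (m - i + 1) 2 *
            (X 1 : MvPolynomial (Fin 2) K) ^ Nat.choose i 2) '' Set.Icc 1 m) := by
  classical
  rw [Ideal.prod_span]
  apply le_antisymm
  · rw [Ideal.span_le]
    intro p hp
    rw [Set.mem_finset_prod] at hp
    obtain ⟨g, hg, hprod⟩ := hp
    set S := (Finset.Icc 1 (m - 1)).filter (fun i => g i = X 1 ^ i) with hSdef
    set T := (Finset.Icc 1 (m - 1)).filter (fun i => ¬ g i = X 1 ^ i) with hTdef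
    set B := ∑ i ∈ S, i with hBdef
    set A := ∑ i ∈ T, (m - i) with hAdef
    have hsplit : (∏ i ∈ S, g i) * ∏ i ∈ T, g i = p := by
      rw [hSdef, hTdef, Finset.prod_filter_mul_prod_filter_not, hprod]
    have hS1 : ∏ i ∈ S, g i = (X 1 : MvPolynomial (Fin 2) K) ^ B := by
      rw [hBdef, ← Finset.prod_pow_eq_pow_sum]
      exact Finset.prod_congr rfl fun i hi => (Finset.mem_filter.mp hi).2
    have hT1 : ∏ i ∈ T, g i = (X 0 : MvPolynomial (Fin 2) K) ^ A := by
      rw [hAdef, ← Finset.prod_pow_eq_pow_sum]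
      refine Finset.prod_congr rfl fun i hi => ?_
      obtain ⟨hi1, hi2⟩ := Finset.mem_filter.mp hi
      have := hg hi1
      simp only [Set.mem_insert_iff, Set.mem_singleton_iff] at this
      tauto
    have hp' : p = (X 0 : MvPolynomial (Fin 2) K) ^ A * (X 1 : MvPolynomial (Fin 2) K) ^ B := by
      rw [← hsplit, hS1, hT1, mul_comm]
    -- cardinalities
    set k := S.card with hkdef
    have hSsub : S ⊆ Finset.Icc 1 (m - 1) := Finset.filter_subset _ _
    have hk : k ≤ m - 1 := by
      have := Finset.card_le_card hSsub
      simpa [Nat.card_Icc] using this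
    -- lower bound for B
    have hd : (k + 1).choose 2 ≤ B :=
      aux_sum_lower S fun i hi => (Finset.mem_Icc.mp (hSsub hi)).1
    -- lower bound for A
    have hc : (m - k).choose 2 ≤ A := by
      set T' := T.image (fun i => m - i) with hT'def
      have hinj : Set.InjOn (fun i => m - i) ↑T := by
        intro a ha b hb hab
        have ha' := Finset.mem_Icc.mp (Finset.filter_subset _ _ ha)
        have hb' := Finset.mem_Icc.mp (Finset.filter_subset _ _ hb)
        simp only at hab
        omega
      have hsum : ∑ i ∈ T', i = A := by
        rw [hT'def, Finset.sum_image (fun a ha b hb => hinj ha hb)]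
      have hcardT : T.card = (m - 1) - k := by
        have := Finset.card_filter_add_card_filter_not
          (s := Finset.Icc 1 (m - 1)) (p := fun i => g i = X 1 ^ i)
        rw [Nat.card_Icc] at this
        simp only [← hSdef, ← hTdef, ← hkdef] at this
        omega
      have hcardT' : T'.card = (m - 1) - k := by
        rw [hT'def, Finset.card_image_of_injOn hinj, hcardT]
      have h1 : ∀ i ∈ T', 1 ≤ i := by
        intro i hi
        rw [hT'def, Finset.mem_image] at hi
        obtain ⟨a, ha, rfl⟩ := hi
        have := Finset.mem_Icc.mp (Finset.filter_subset _ _ ha)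
        omega
      have := aux_sum_lower T' h1
      rw [hcardT', hsum] at this
      have : ((m - 1) - k + 1).choose 2 ≤ A := this
      have heq : (m - 1) - k + 1 = m - k := by omega
      rwa [heq] at this
    -- the generator
    have hjmem : (k + 1 : ℕ) ∈ Set.Icc 1 m := Set.mem_Icc.mpr ⟨by omega, by omega⟩
    have hgenmem : (X 0 : MvPolynomial (Fin 2) K) ^ (m - k).choose 2 *
        (X 1 : MvPolynomial (Fin 2) K) ^ (k + 1).choose 2 ∈
        ((fun i : ℕ =>
          (X 0 : MvPolynomial (Fin 2) K) ^ Nat.choose (m - i + 1) 2 *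
            (X 1 : MvPolynomial (Fin 2) K) ^ Nat.choose i 2) '' Set.Icc 1 m) := by
      refine ⟨k + 1, hjmem, ?_⟩
      show (X 0 : MvPolynomial (Fin 2) K) ^ (m - (k + 1) + 1).choose 2 *
        (X 1 : MvPolynomial (Fin 2) K) ^ (k + 1).choose 2 = _
      have : m - (k + 1) + 1 = m - k := by omega
      rw [this]
    obtain ⟨e, he⟩ := Nat.exists_eq_add_of_le hc
    obtain ⟨f, hf⟩ := Nat.exists_eq_add_of_le hd
    have hfactor : p = ((X 0 : MvPolynomial (Fin 2) K) ^ (m - k).choose 2 *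
        (X 1 : MvPolynomial (Fin 2) K) ^ (k + 1).choose 2) *
        ((X 0 : MvPolynomial (Fin 2) K) ^ e * (X 1 : MvPolynomial (Fin 2) K) ^ f) := by
      rw [hp', he, hf, pow_add, pow_add]; ring
    rw [hfactor]
    exact Ideal.mul_mem_right _ _ (Ideal.subset_span hgenmem)
  · rw [Ideal.span_le]
    rintro p ⟨j, hj, rfl⟩
    obtain ⟨hj1, hj2⟩ := Set.mem_Icc.mp hj
    apply Ideal.subset_span
    set g : ℕ → MvPolynomial (Fin 2) K :=
      fun i => if i < j then (X 1 : MvPolynomial (Fin 2) K) ^ i else X 0 ^ (m - i) with hgdef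
    have hgmem : ∀ i ∈ Finset.Icc 1 (m - 1), g i ∈
        ({(X 0 : MvPolynomial (Fin 2) K) ^ (m - i), (X 1 : MvPolynomial (Fin 2) K) ^ i} :
          Set (MvPolynomial (Fin 2) K)) := by
      intro i _
      rw [hgdef]
      by_cases h : i < j <;> simp [h]
    have hprodg : ∏ i ∈ Finset.Icc 1 (m - 1), g i =
        (X 0 : MvPolynomial (Fin 2) K) ^ Nat.choose (m - j + 1) 2 *
          (X 1 : MvPolynomial (Fin 2) K) ^ Nat.choose j 2 := by
      have hIcc : Finset.Icc 1 (m - 1) = Finset.Ioc 0 (m - 1) := by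
        rw [← Finset.Icc_add_one_left_eq_Ioc]; rfl
      rw [hIcc, ← Finset.prod_Ioc_consecutive g (by omega : (0:ℕ) ≤ j - 1)
        (by omega : j - 1 ≤ m - 1)]
      have h1 : ∏ i ∈ Finset.Ioc 0 (j - 1), g i =
          (X 1 : MvPolynomial (Fin 2) K) ^ Nat.choose j 2 := by
        have : ∏ i ∈ Finset.Ioc 0 (j - 1), g i =
            ∏ i ∈ Finset.Ioc 0 (j - 1), (X 1 : MvPolynomial (Fin 2) K) ^ i := by
          refine Finset.prod_congr rfl fun i hi => ?_
          obtain ⟨hi1, hi2⟩ := Finset.mem_Ioc.mp hi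
          rw [hgdef]
          simp only [if_pos (by omega : i < j)]
        rw [this, Finset.prod_pow_eq_pow_sum]
        congr 1
        have : Finset.Ioc 0 (j - 1) = Finset.Icc 1 (j - 1) := by rw [← Finset.Icc_add_one_left_eq_Ioc]; rfl
        rw [this, aux_sum_Icc_id]
        congr 1
        omega
      have h2 : ∏ i ∈ Finset.Ioc (j - 1) (m - 1), g i =
          (X 0 : MvPolynomial (Fin 2) K) ^ Nat.choose (m - j + 1) 2 := by
        have : ∏ i ∈ Finset.Ioc (j - 1) (m - 1), g i =
            ∏ i ∈ Finset.Ioc (j - 1) (m - 1), (X 0 : MvPolynomial (Fin 2) K) ^ (m - i) := by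
          refine Finset.prod_congr rfl fun i hi => ?_
          obtain ⟨hi1, hi2⟩ := Finset.mem_Ioc.mp hi
          rw [hgdef]
          simp only [if_neg (by omega : ¬ i < j)]
        rw [this, Finset.prod_pow_eq_pow_sum]
        congr 1
        have hsum : ∑ i ∈ Finset.Ioc (j - 1) (m - 1), (m - i) =
            ∑ i ∈ Finset.Icc 1 (m - j), i := by
          refine Finset.sum_nbij' (fun i => m - i) (fun i => m - i) ?_ ?_ ?_ ?_ (fun a ha => rfl) <;>
            intro a ha <;>
            simp only [Finset.mem_Ioc, Finset.mem_Icc] at ha ⊢ <;>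
            omega
        rw [hsum, aux_sum_Icc_id]
      rw [h1, h2, mul_comm]
    show (X 0 : MvPolynomial (Fin 2) K) ^ Nat.choose (m - j + 1) 2 *
      (X 1 : MvPolynomial (Fin 2) K) ^ Nat.choose j 2 ∈ _
    rw [← hprodg]
    exact Set.finset_prod_mem_finset_prod _ _ g hgmem
end

section
/- Let m ≥ 2 be an integer. For 1 ≤ i ≤ m-1 let K_i ⊆ ℕ² be the set ((m-i,0) + ℕ²) ∪ ((0,i) + ℕ²), i.e. the set of pairs (a,b) of natural numbers with a ≥ m-i or b ≥ i. Then the Minkowski sum K_1 + K_2 + ... + K_{m-1} (the set of all sums v_1 + ... + v_{m-1} with v_i ∈ K_i) equals the union over i = 1, ..., m of the translated quadrants (C(m-i+1,2), C(i,2)) + ℕ², where C(n,2) = n(n-1)/2. -/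
open Pointwise

lemma memQ (v x : ℕ × ℕ) : x ∈ ({v} + (Set.univ : Set (ℕ × ℕ))) ↔ v.1 ≤ x.1 ∧ v.2 ≤ x.2 := by
  rw [Set.singleton_add, Set.image_univ, Set.mem_range]
  constructor
  · rintro ⟨u, rfl⟩
    exact ⟨Nat.le_add_right _ _, Nat.le_add_right _ _⟩
  · rintro ⟨h1, h2⟩
    refine ⟨(x.1 - v.1, x.2 - v.2), ?_⟩
    apply Prod.ext <;> simp <;> omega

lemma addQ (a b : ℕ × ℕ) :
    ({a} + (Set.univ : Set (ℕ × ℕ))) + ({b} + (Set.univ : Set (ℕ × ℕ)))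
      = {a + b} + (Set.univ : Set (ℕ × ℕ)) := by
  ext x
  rw [memQ, Set.mem_add]
  constructor
  · rintro ⟨y, hy, z, hz, rfl⟩
    rw [memQ] at hy; rw [memQ] at hz
    simp only [Prod.fst_add, Prod.snd_add]
    omega
  · rintro ⟨h1, h2⟩
    simp only [Prod.fst_add, Prod.snd_add] at h1 h2
    refine ⟨a, by rw [memQ]; omega, (x.1 - a.1, x.2 - a.2),
      by rw [memQ]; simp; omega, ?_⟩
    apply Prod.ext <;> simp <;> omega

lemma sumQ (t : Finset ℕ) (ht : t.Nonempty) (w : ℕ → ℕ × ℕ) :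
    (∑ j ∈ t, ({w j} + (Set.univ : Set (ℕ × ℕ)))) = {∑ j ∈ t, w j} + Set.univ := by
  induction ht using Finset.Nonempty.cons_induction with
  | singleton a => simp
  | cons a s ha hs ih =>
      rw [Finset.sum_cons, Finset.sum_cons, ih, addQ]

lemma sum_subset_sum (t : Finset ℕ) (f g : ℕ → Set (ℕ × ℕ)) (h : ∀ j ∈ t, f j ⊆ g j) :
    (∑ j ∈ t, f j) ⊆ ∑ j ∈ t, g j := by
  induction t using Finset.cons_induction with
  | empty => simp
  | cons a s ha ih =>
      rw [Finset.sum_cons, Finset.sum_cons]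
      exact Set.add_subset_add (h a (Finset.mem_cons_self a s))
        (ih fun j hj => h j (Finset.mem_cons.2 (Or.inr hj)))

lemma choose_two_succ (n : ℕ) : (n + 1).choose 2 = n + n.choose 2 := by
  have := Nat.choose_succ_succ n 1
  rw [Nat.choose_one_right] at this
  exact this

lemma sum_ge_choose (S : Finset ℕ) (h0 : 0 ∉ S) : (S.card + 1).choose 2 ≤ ∑ i ∈ S, i := by
  induction S using Finset.strongInduction with
  | _ S ih =>
    rcases S.eq_empty_or_nonempty with rfl | hS
    · simp
    · set M := S.max' hS with hM
      have hMS : M ∈ S := S.max'_mem hS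
      have hsub : S ⊆ Finset.Icc 1 M := by
        intro i hi
        rw [Finset.mem_Icc]
        exact ⟨Nat.one_le_iff_ne_zero.2 fun h => h0 (h ▸ hi), S.le_max' i hi⟩
      have hcard : S.card ≤ M := by
        calc S.card ≤ (Finset.Icc 1 M).card := Finset.card_le_card hsub
        _ = M := by rw [Nat.card_Icc]; omega
      have herase := ih (S.erase M) (Finset.erase_ssubset hMS)
        (fun h => h0 (Finset.mem_of_mem_erase h))
      have hce : (S.erase M).card = S.card - 1 := Finset.card_erase_of_mem hMS
      have hsum : M + ∑ i ∈ S.erase M, i = ∑ i ∈ S, i := Finset.add_sum_erase S id hMS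
      have hc1 : 1 ≤ S.card := Finset.card_pos.2 hS
      have hchoose : (S.card + 1).choose 2 = S.card + (S.card - 1 + 1).choose 2 := by
        have : S.card - 1 + 1 = S.card := by omega
        rw [this, choose_two_succ]
      rw [hce] at herase
      omega

lemma sum_Icc_id (n : ℕ) : ∑ j ∈ Finset.Icc 1 n, j = (n + 1).choose 2 := by
  induction n with
  | zero => simp
  | succ n ih =>
      rw [Finset.sum_Icc_succ_top (by omega), ih, choose_two_succ (n+1)]
      omega

lemma sum_Icc_rev (m i : ℕ) (hi : 1 ≤ i) :
    ∑ j ∈ Finset.Icc i (m - 1), (m - j) = (m - i + 1).choose 2 := by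
  rcases le_or_gt m i with h | h
  · have h1 : Finset.Icc i (m-1) = ∅ := by
      rw [Finset.Icc_eq_empty_iff]; omega
    have h2 : m - i = 0 := by omega
    simp [h1, h2]
  · rw [← sum_Icc_id (m - i)]
    apply Finset.sum_nbij' (i := fun j => m - j) (j := fun a => m - a)
    · intro j hj; rw [Finset.mem_Icc] at *; omega
    · intro a ha; rw [Finset.mem_Icc] at *; omega
    · intro j hj; rw [Finset.mem_Icc] at hj; omega
    · intro a ha; rw [Finset.mem_Icc] at ha; omega
    · intro j hj; rfl


/-- The Minkowski sum of the staircase cones `K_i = ((m-i,0) + ℕ²) ∪ ((0,i) + ℕ²)`,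
`i = 1, ..., m-1`, equals the union of the translated quadrants
`(C(m-i+1,2), C(i,2)) + ℕ²`, `i = 1, ..., m`. -/
theorem stmt_1 (m : ℕ) (hm : 2 ≤ m) :
    (∑ i ∈ Finset.Icc 1 (m - 1),
        (({((m - i, 0) : ℕ × ℕ)} + (Set.univ : Set (ℕ × ℕ))) ∪
          ({((0, i) : ℕ × ℕ)} + (Set.univ : Set (ℕ × ℕ))))) =
      ⋃ i ∈ Finset.Icc 1 m,
        ({((Nat.choose (m - i + 1) 2, Nat.choose i 2) : ℕ × ℕ)} +
          (Set.univ : Set (ℕ × ℕ))) := by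
  classical
  apply Set.Subset.antisymm
  · intro x hx
    rw [Set.mem_finset_sum] at hx
    obtain ⟨g, hg, hsum⟩ := hx
    set S := (Finset.Icc 1 (m-1)).filter (fun j => ¬ (m - j ≤ (g j).1)) with hSdef
    set T := (Finset.Icc 1 (m-1)).filter (fun j => m - j ≤ (g j).1) with hTdef
    have hS2 : ∀ j ∈ S, j ≤ (g j).2 := by
      intro j hj
      rw [hSdef, Finset.mem_filter] at hj
      rcases hg hj.1 with h | h
      · rw [memQ] at h; exact absurd h.1 hj.2
      · rw [memQ] at h; exact h.2
    have hT1 : ∀ j ∈ T, m - j ≤ (g j).1 := by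
      intro j hj; rw [hTdef, Finset.mem_filter] at hj; exact hj.2
    have hcardST : T.card + S.card = m - 1 := by
      rw [hSdef, hTdef, Finset.card_filter_add_card_filter_not, Nat.card_Icc]
      omega
    have hx1 : x.1 = ∑ j ∈ Finset.Icc 1 (m-1), (g j).1 := by
      rw [← hsum, Prod.fst_sum]
    have hx2 : x.2 = ∑ j ∈ Finset.Icc 1 (m-1), (g j).2 := by
      rw [← hsum, Prod.snd_sum]
    have hb2 : (S.card + 1).choose 2 ≤ x.2 := by
      calc (S.card + 1).choose 2 ≤ ∑ j ∈ S, j := by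
            apply sum_ge_choose
            intro h
            rw [hSdef, Finset.mem_filter, Finset.mem_Icc] at h
            omega
        _ ≤ ∑ j ∈ S, (g j).2 := Finset.sum_le_sum hS2
        _ ≤ ∑ j ∈ Finset.Icc 1 (m-1), (g j).2 :=
            Finset.sum_le_sum_of_subset (Finset.filter_subset _ _)
        _ = x.2 := hx2.symm
    have hb1 : (T.card + 1).choose 2 ≤ x.1 := by
      set T' := T.image (fun j => m - j) with hT'
      have hTmem : ∀ j ∈ T, 1 ≤ j ∧ j ≤ m - 1 := by
        intro j hj
        rw [hTdef, Finset.mem_filter, Finset.mem_Icc] at hj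
        exact hj.1
      have hinj : Set.InjOn (fun j => m - j) T := by
        intro a ha b hb hab
        have := hTmem a ha; have := hTmem b hb
        simp only at hab
        omega
      have hcT : T'.card = T.card := Finset.card_image_of_injOn hinj
      have hsT : ∑ a ∈ T', a = ∑ j ∈ T, (m - j) := Finset.sum_image
        (fun a ha b hb h => hinj (Finset.mem_coe.2 ha) (Finset.mem_coe.2 hb) h)
      have h0T : 0 ∉ T' := by
        rw [hT', Finset.mem_image]
        rintro ⟨a, ha, hae⟩
        have := hTmem a ha
        omega
      calc (T.card + 1).choose 2 = (T'.card + 1).choose 2 := by rw [hcT]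
        _ ≤ ∑ a ∈ T', a := sum_ge_choose T' h0T
        _ = ∑ j ∈ T, (m - j) := hsT
        _ ≤ ∑ j ∈ T, (g j).1 := Finset.sum_le_sum hT1
        _ ≤ ∑ j ∈ Finset.Icc 1 (m-1), (g j).1 :=
            Finset.sum_le_sum_of_subset (Finset.filter_subset _ _)
        _ = x.1 := hx1.symm
    rw [Set.mem_iUnion₂]
    refine ⟨S.card + 1, ?_, ?_⟩
    · rw [Finset.mem_Icc]; omega
    · rw [memQ]
      constructor
      · have he : m - (S.card + 1) + 1 = T.card + 1 := by omega
        simpa [he] using hb1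
      · simpa using hb2
  · intro x hx
    rw [Set.mem_iUnion₂] at hx
    obtain ⟨i, hi, hx⟩ := hx
    rw [Finset.mem_Icc] at hi
    rw [memQ] at hx
    set w : ℕ → ℕ × ℕ := fun j => if j < i then ((0, j) : ℕ × ℕ) else (m - j, 0) with hw
    have hne : (Finset.Icc 1 (m-1)).Nonempty := by
      rw [Finset.nonempty_Icc]; omega
    have key : ∑ j ∈ Finset.Icc 1 (m-1), w j
        = ((Nat.choose (m - i + 1) 2, Nat.choose i 2) : ℕ × ℕ) := by
      apply Prod.ext
      · rw [Prod.fst_sum]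
        have hc : ∀ j ∈ Finset.Icc 1 (m-1), (w j).1 = if j < i then 0 else m - j := by
          intro j hj
          by_cases h : j < i <;> simp [hw, h]
        rw [Finset.sum_congr rfl hc, Finset.sum_ite, Finset.sum_const_zero, zero_add]
        have hfe : (Finset.Icc 1 (m-1)).filter (fun j => ¬ j < i) = Finset.Icc i (m-1) := by
          ext j
          simp only [Finset.mem_filter, Finset.mem_Icc, not_lt]
          omega
        rw [hfe, sum_Icc_rev m i hi.1]
      · rw [Prod.snd_sum]
        have hc : ∀ j ∈ Finset.Icc 1 (m-1), (w j).2 = if j < i then j else 0 := by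
          intro j hj
          by_cases h : j < i <;> simp [hw, h]
        rw [Finset.sum_congr rfl hc, Finset.sum_ite, Finset.sum_const_zero, add_zero]
        have hfe : (Finset.Icc 1 (m-1)).filter (fun j => j < i) = Finset.Icc 1 (i-1) := by
          ext j
          simp only [Finset.mem_filter, Finset.mem_Icc]
          omega
        have hi1 : i - 1 + 1 = i := by omega
        rw [hfe, sum_Icc_id (i-1), hi1]
    have sub1 : ({((Nat.choose (m - i + 1) 2, Nat.choose i 2) : ℕ × ℕ)}
        + (Set.univ : Set (ℕ × ℕ)))
        ⊆ ∑ j ∈ Finset.Icc 1 (m - 1),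
          (({((m - j, 0) : ℕ × ℕ)} + (Set.univ : Set (ℕ × ℕ))) ∪
            ({((0, j) : ℕ × ℕ)} + (Set.univ : Set (ℕ × ℕ)))) := by
      rw [← key, ← sumQ _ hne w]
      apply sum_subset_sum
      intro j hj
      by_cases h : j < i
      · refine Set.subset_union_of_subset_right ?_ _
        simp [hw, h]
      · refine Set.subset_union_of_subset_left ?_ _
        simp [hw, h]
    exact sub1 (by rw [memQ]; exact hx)
end

section
/- Let m ≥ 2 be an integer and let 1 ≤ i ≤ m-1. In the polynomial ring ℂ[x,y], the quotient ring ℂ[x,y]/(x^{m-i} - y^i, x·y) is a finite-dimensional ℂ-vector space of dimension m. -/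
open MvPolynomial

noncomputable section

private def mymon (a : ℕ) (j : ℕ) : MvPolynomial (Fin 2) ℂ :=
  if j ≤ a then X 0 ^ j else X 1 ^ (j - a)

private def Lmap (a b : ℕ) : MvPolynomial (Fin 2) ℂ →ₗ[ℂ] (Fin (a + b) → ℂ) where
  toFun p := fun j =>
    if j.val < a then coeff (Finsupp.single 0 j.val) p
    else if j.val = a then coeff (Finsupp.single 0 a) p + coeff (Finsupp.single 1 b) p
    else coeff (Finsupp.single 1 (j.val - a)) p
  map_add' p q := by
    funext j
    simp only [Pi.add_apply, coeff_add]
    split_ifs <;> ring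
  map_smul' c p := by
    funext j
    simp only [Pi.smul_apply, coeff_smul, RingHom.id_apply, smul_eq_mul]
    split_ifs <;> ring

private lemma Lmap_apply (a b : ℕ) (p : MvPolynomial (Fin 2) ℂ) (j : Fin (a + b)) :
    Lmap a b p j =
      if j.val < a then coeff (Finsupp.single 0 j.val) p
      else if j.val = a then coeff (Finsupp.single 0 a) p + coeff (Finsupp.single 1 b) p
      else coeff (Finsupp.single 1 (j.val - a)) p := rfl

private lemma coeff_cross (u v : Fin 2) (huv : v ≠ u) (n k : ℕ) (h : ¬(n = 0 ∧ k = 0)) :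
    coeff (Finsupp.single u n) (X v ^ k : MvPolynomial (Fin 2) ℂ) = 0 := by
  rw [coeff_X_pow, if_neg]
  intro hc
  rcases (Finsupp.single_eq_single_iff _ _ _ _).mp hc with ⟨h1, _⟩ | ⟨h1, h2⟩
  · exact huv h1
  · exact h ⟨h2, h1⟩

private lemma coeff_same (u : Fin 2) (n k : ℕ) :
    coeff (Finsupp.single u n) (X u ^ k : MvPolynomial (Fin 2) ℂ) = if n = k then 1 else 0 := by
  rw [coeff_X_pow]
  by_cases h : n = k
  · simp [h]
  · rw [if_neg, if_neg h]
    intro hc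
    rcases (Finsupp.single_eq_single_iff _ _ _ _).mp hc with ⟨_, h2⟩ | ⟨h1, h2⟩
    · exact h h2.symm
    · exact h (h2.trans h1.symm)

private lemma coeff_single_mul_X_pow (p : MvPolynomial (Fin 2) ℂ) (u v : Fin 2) (n k : ℕ) :
    coeff (Finsupp.single u n) (p * X v ^ k) =
      if Finsupp.single v k ≤ Finsupp.single u n then
        coeff (Finsupp.single u n - Finsupp.single v k) p else 0 := by
  rw [X_pow_eq_monomial, coeff_mul_monomial']
  split_ifs <;> simp

private lemma single_le_single_same (u : Fin 2) (x y : ℕ) :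
    Finsupp.single u x ≤ Finsupp.single u y ↔ x ≤ y := by
  rw [Finsupp.single_le_iff, Finsupp.single_eq_same]

private lemma single_le_single_ne (u v : Fin 2) (h : u ≠ v) (x y : ℕ) (hx : 1 ≤ x) :
    ¬ Finsupp.single u x ≤ Finsupp.single v y := by
  rw [Finsupp.single_le_iff, Finsupp.single_eq_of_ne' (Ne.symm h)]
  omega

private lemma coeff_mul_xy0 (q : MvPolynomial (Fin 2) ℂ) (n : ℕ) :
    coeff (Finsupp.single (0 : Fin 2) n) (q * (X 0 * X 1)) = 0 := by
  rw [show q * (X 0 * X 1) = (q * X 0) * X 1 ^ 1 by ring, coeff_single_mul_X_pow,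
    if_neg (single_le_single_ne 1 0 (by decide) 1 n le_rfl)]

private lemma coeff_mul_xy1 (q : MvPolynomial (Fin 2) ℂ) (n : ℕ) :
    coeff (Finsupp.single (1 : Fin 2) n) (q * (X 0 * X 1)) = 0 := by
  rw [show q * (X 0 * X 1) = (q * X 1) * X 0 ^ 1 by ring, coeff_single_mul_X_pow,
    if_neg (single_le_single_ne 0 1 (by decide) 1 n le_rfl)]

private theorem aux (a b : ℕ) (ha : 1 ≤ a) (hb : 1 ≤ b) :
    FiniteDimensional ℂ
      (MvPolynomial (Fin 2) ℂ ⧸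
        Ideal.span {X 0 ^ a - X 1 ^ b, (X 0 : MvPolynomial (Fin 2) ℂ) * X 1}) ∧
    Module.finrank ℂ
      (MvPolynomial (Fin 2) ℂ ⧸
        Ideal.span {X 0 ^ a - X 1 ^ b, (X 0 : MvPolynomial (Fin 2) ℂ) * X 1}) = a + b := by
  set I : Ideal (MvPolynomial (Fin 2) ℂ) :=
    Ideal.span {X 0 ^ a - X 1 ^ b, (X 0 : MvPolynomial (Fin 2) ℂ) * X 1} with hI
  set Qa := Ideal.Quotient.mkₐ ℂ I with hQa
  have hxyQ : Qa (X 0) * Qa (X 1) = 0 := by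
    rw [← map_mul, hQa, Ideal.Quotient.mkₐ_eq_mk, Ideal.Quotient.eq_zero_iff_mem]
    exact Ideal.subset_span (Set.mem_insert_of_mem _ rfl)
  have hpow : Qa (X 0) ^ a = Qa (X 1) ^ b := by
    rw [← map_pow, ← map_pow, ← sub_eq_zero, ← map_sub, hQa, Ideal.Quotient.mkₐ_eq_mk,
      Ideal.Quotient.eq_zero_iff_mem]
    exact Ideal.subset_span (Set.mem_insert _ _)
  set v : Fin (a + b) → (MvPolynomial (Fin 2) ℂ ⧸ I) := fun t => Qa (mymon a t.val) with hv
  set S : Submodule ℂ (MvPolynomial (Fin 2) ℂ ⧸ I) := Submodule.span ℂ (Set.range v) with hS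
  have hmemx : ∀ j : ℕ, j ≤ a → Qa (X 0) ^ j ∈ S := by
    intro j hj
    refine Submodule.subset_span ⟨⟨j, by omega⟩, ?_⟩
    simp [hv, mymon, hj, map_pow]
  have hmemy : ∀ k : ℕ, 1 ≤ k → k < b → Qa (X 1) ^ k ∈ S := by
    intro k hk1 hk2
    refine Submodule.subset_span ⟨⟨a + k, by omega⟩, ?_⟩
    have hcond : ¬ (a + k ≤ a) := by omega
    simp [hv, mymon, hcond, map_pow]
  have hyb : Qa (X 1) ^ b * Qa (X 0) = 0 := by
    obtain ⟨t, rfl⟩ : ∃ t, b = t + 1 := ⟨b - 1, by omega⟩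
    rw [pow_succ, mul_assoc, mul_comm (Qa (X 1)) (Qa (X 0)), hxyQ, mul_zero]
  have hxa : Qa (X 0) ^ a * Qa (X 1) = 0 := by
    obtain ⟨t, rfl⟩ : ∃ t, a = t + 1 := ⟨a - 1, by omega⟩
    rw [pow_succ, mul_assoc, hxyQ, mul_zero]
  have hx_zero : ∀ j : ℕ, a < j → Qa (X 0) ^ j = 0 := by
    intro j hj
    obtain ⟨s, rfl⟩ : ∃ s, j = a + 1 + s := ⟨j - a - 1, by omega⟩
    rw [pow_add, pow_succ, hpow, hyb, zero_mul]
  have hy_zero : ∀ k : ℕ, b < k → Qa (X 1) ^ k = 0 := by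
    intro k hk
    obtain ⟨s, rfl⟩ : ∃ s, k = b + 1 + s := ⟨k - b - 1, by omega⟩
    rw [pow_add, pow_succ, ← hpow, hxa, zero_mul]
  have hmono : ∀ j k : ℕ, Qa (X 0 ^ j * X 1 ^ k) ∈ S := by
    intro j k
    rcases Nat.eq_zero_or_pos k with hk | hk
    · subst hk
      rw [pow_zero, mul_one, map_pow]
      rcases le_or_gt j a with hj | hj
      · exact hmemx j hj
      · rw [hx_zero j hj]; exact S.zero_mem
    rcases Nat.eq_zero_or_pos j with hj | hj
    · subst hj
      rw [pow_zero, one_mul, map_pow]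
      rcases lt_trichotomy k b with h | h | h
      · exact hmemy k hk h
      · subst h
        rw [← hpow]
        exact hmemx a le_rfl
      · rw [hy_zero k h]; exact S.zero_mem
    · have hrw : (X 0 : MvPolynomial (Fin 2) ℂ) ^ j * X 1 ^ k
          = (X 0 ^ (j - 1) * X 1 ^ (k - 1)) * (X 0 * X 1) := by
        obtain ⟨j', rfl⟩ : ∃ j', j = j' + 1 := ⟨j - 1, by omega⟩
        obtain ⟨k', rfl⟩ : ∃ k', k = k' + 1 := ⟨k - 1, by omega⟩
        simp only [Nat.add_sub_cancel]
        ring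
      rw [hrw]
      simp only [map_mul]
      rw [hxyQ, mul_zero]
      exact S.zero_mem
  have hspan : ⊤ ≤ Submodule.span ℂ (Set.range v) := by
    rw [← hS]
    rintro z -
    obtain ⟨p, rfl⟩ := Ideal.Quotient.mkₐ_surjective ℂ (I := I) z
    induction p using MvPolynomial.induction_on' with
    | add p q hp hq => rw [map_add]; exact S.add_mem hp hq
    | monomial u c =>
      have hmons : monomial u c = c • ((X 0 : MvPolynomial (Fin 2) ℂ) ^ u 0 * X 1 ^ u 1) := by
        rw [monomial_eq, Finsupp.prod_fintype _ _ (fun i => pow_zero _), Fin.prod_univ_two,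
          smul_eq_C_mul]
      rw [hmons, map_smul]
      exact S.smul_mem _ (hmono (u 0) (u 1))
  have hker : ∀ p ∈ I, Lmap a b p = 0 := by
    intro p hp
    rw [hI, Ideal.mem_span_pair] at hp
    obtain ⟨u, w, rfl⟩ := hp
    rw [map_add]
    have h2 : Lmap a b (w * (X 0 * X 1)) = 0 := by
      funext j
      rw [Lmap_apply, Pi.zero_apply]
      split_ifs
      · exact coeff_mul_xy0 _ _
      · rw [coeff_mul_xy0, coeff_mul_xy1, add_zero]
      · exact coeff_mul_xy1 _ _
    have h1 : Lmap a b (u * (X 0 ^ a - X 1 ^ b)) = 0 := by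
      funext j
      rw [Lmap_apply, Pi.zero_apply, mul_sub]
      split_ifs with hc1 hc2
      · rw [coeff_sub, coeff_single_mul_X_pow,
          if_neg (by rw [single_le_single_same]; omega),
          coeff_single_mul_X_pow,
          if_neg (single_le_single_ne 1 0 (by decide) b _ hb), sub_zero]
      · rw [coeff_sub, coeff_sub,
          coeff_single_mul_X_pow (u := 0) (v := 0),
          if_pos ((single_le_single_same 0 a a).mpr le_rfl),
          coeff_single_mul_X_pow (u := 0) (v := 1),
          if_neg (single_le_single_ne 1 0 (by decide) b a hb),
          coeff_single_mul_X_pow (u := 1) (v := 0),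
          if_neg (single_le_single_ne 0 1 (by decide) a b ha),
          coeff_single_mul_X_pow (u := 1) (v := 1),
          if_pos ((single_le_single_same 1 b b).mpr le_rfl),
          tsub_self, tsub_self]
        ring
      · rw [coeff_sub,
          coeff_single_mul_X_pow (u := 1) (v := 0),
          if_neg (single_le_single_ne 0 1 (by decide) a _ ha),
          coeff_single_mul_X_pow (u := 1) (v := 1),
          if_neg (by rw [single_le_single_same]; have := j.isLt; omega), sub_zero]
    rw [h1, h2, add_zero]
  have hLmon : ∀ t : Fin (a + b), Lmap a b (mymon a t.val) = Pi.single t 1 := by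
    intro t
    funext j
    rw [Lmap_apply]
    by_cases ht : t.val ≤ a
    · simp only [mymon, if_pos ht]
      split_ifs with h1 h2
      · rw [coeff_same]
        by_cases hjt : j = t
        · subst hjt; simp
        · rw [if_neg (fun h => hjt (Fin.ext h)), Pi.single_eq_of_ne hjt]
      · rw [coeff_same, coeff_cross 1 0 (by decide) b t.val (by omega), add_zero]
        by_cases hjt : j = t
        · subst hjt; rw [if_pos (by omega), Pi.single_eq_same]
        · rw [if_neg (fun h => hjt (Fin.ext (by omega))), Pi.single_eq_of_ne hjt]
      · rw [coeff_cross 1 0 (by decide) (j.val - a) t.val (by omega)]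
        have hjt : j ≠ t := by intro h; subst h; omega
        rw [Pi.single_eq_of_ne hjt]
    · simp only [mymon, if_neg ht]
      split_ifs with h1 h2
      · rw [coeff_cross 0 1 (by decide) j.val (t.val - a) (by omega)]
        have hjt : j ≠ t := by intro h; subst h; omega
        rw [Pi.single_eq_of_ne hjt]
      · rw [coeff_cross 0 1 (by decide) a (t.val - a) (by omega), zero_add, coeff_same,
          if_neg (show ¬ b = t.val - a by have := t.isLt; omega)]
        have hjt : j ≠ t := by intro h; subst h; omega
        rw [Pi.single_eq_of_ne hjt]
      · rw [coeff_same]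
        by_cases hjt : j = t
        · subst hjt; simp
        · rw [if_neg (fun h => hjt (Fin.ext (by omega))), Pi.single_eq_of_ne hjt]
  have hLI : LinearIndependent ℂ v := by
    rw [Fintype.linearIndependent_iff]
    intro c hc j
    have hmem : (∑ t, c t • mymon a t.val) ∈ I := by
      rw [← Ideal.Quotient.eq_zero_iff_mem, ← Ideal.Quotient.mkₐ_eq_mk ℂ, ← hQa, map_sum]
      simp only [map_smul]
      exact hc
    have h0 := congrFun (hker _ hmem) j
    rw [map_sum] at h0
    simp only [map_smul, hLmon, Finset.sum_apply, Pi.smul_apply, Pi.single_apply, smul_eq_mul,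
      mul_ite, mul_one, mul_zero, Finset.sum_ite_eq, Finset.mem_univ, if_true,
      Pi.zero_apply] at h0
    exact h0
  let bs : Module.Basis (Fin (a + b)) ℂ (MvPolynomial (Fin 2) ℂ ⧸ I) := Module.Basis.mk hLI hspan
  exact ⟨Module.Finite.of_basis bs, by rw [Module.finrank_eq_card_basis bs, Fintype.card_fin]⟩

/-- `ℂ[x,y]/(x^{m-i} - y^i, x·y)` has ℂ-dimension `m`. -/
theorem stmt_3 (m i : ℕ) (hm : 2 ≤ m) (hi1 : 1 ≤ i) (hi2 : i ≤ m - 1) :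
    FiniteDimensional ℂ
      (MvPolynomial (Fin 2) ℂ ⧸
        Ideal.span {X 0 ^ (m - i) - X 1 ^ i,
          (X 0 : MvPolynomial (Fin 2) ℂ) * X 1}) ∧
    Module.finrank ℂ
      (MvPolynomial (Fin 2) ℂ ⧸
        Ideal.span {X 0 ^ (m - i) - X 1 ^ i,
          (X 0 : MvPolynomial (Fin 2) ℂ) * X 1}) = m := by
  have h1 : 1 ≤ m - i := by omega
  have h := aux (m - i) i h1 hi1
  rwa [Nat.sub_add_cancel (by omega : i ≤ m)] at h
end
end
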